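/- Let Ω ⊂ ℝ^d be an ε-uniform domain with Whitney covering W, and let [Q,S] be an ε-admissible chain joining Q, S ∈ W with central cube Q_S. Then D(Q,S) ≈ Σ_{P∈[Q,S]} ℓ(P) ≈ ℓ(Q_S), with comparability constants depending only on ε and d. -/

import Mathlib

open MeasureTheory ENNReal

/-- An axis-parallel cube in `ℝ^d`, identified with the closed ball of radius `side/2`
around its center in the sup metric on `Fin d → ℝ`. -/
structure Cube (d : ℕ) where
  center : Fin d → ℝ
  side : ℝ
  side_pos : 0 < side

/-- The set of points of a cube. -/
def Cube.toSet {d : ℕ} (Q : Cube d) : Set (Fin d → ℝ) :=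
  Metric.closedBall Q.center (Q.side / 2)

/-- Distance between two sets. -/
noncomputable def setDist {d : ℕ} (A B : Set (Fin d → ℝ)) : ℝ :=
  sInf (Set.image2 dist A B)

/-- The long distance `D(Q,S) = ℓ(Q) + ℓ(S) + dist(Q,S)` between two cubes. -/
noncomputable def longDist {d : ℕ} (Q S : Cube d) : ℝ :=
  Q.side + S.side + setDist Q.toSet S.toSet

/-- A Whitney covering of `Ω`: a family of essentially disjoint (dyadic-type) cubes whose
union is `Ω`, with side-lengths comparable to the distance to `∂Ω`, and finite
superposition of the dilated cubes `50Q`. -/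
structure WhitneyCovering (d : ℕ) (Ω : Set (Fin d → ℝ)) where
  cubes : Set (Cube d)
  covers : (⋃ Q ∈ cubes, Q.toSet) = Ω
  essDisjoint : ∀ Q ∈ cubes, ∀ S ∈ cubes, Q ≠ S →
    interior Q.toSet ∩ interior S.toSet = ∅
  CW : ℝ
  one_le_CW : 1 ≤ CW
  dist_lb : ∀ Q ∈ cubes, CW * Q.side ≤ setDist Q.toSet (frontier Ω)
  dist_ub : ∀ Q ∈ cubes, setDist Q.toSet (frontier Ω) ≤ 4 * CW * Q.side
  finiteOverlap : ∃ N : ℕ, ∀ x : Fin d → ℝ,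
    {Q ∈ cubes | x ∈ Metric.closedBall Q.center (25 * Q.side)}.Finite ∧
    {Q ∈ cubes | x ∈ Metric.closedBall Q.center (25 * Q.side)}.ncard ≤ N

/-- `S ∈ SH_ρ(P)` : the cube `S` of the covering lies in the `ρ`-shadow of `P`, i.e.
`S ⊆ B(x_P, ρ ℓ(P))`. -/
def memShadow {d : ℕ} {Ω : Set (Fin d → ℝ)} (W : WhitneyCovering d Ω) (ρ : ℝ)
    (S P : Cube d) : Prop :=
  S ∈ W.cubes ∧ P ∈ W.cubes ∧ S.toSet ⊆ Metric.closedBall P.center (ρ * P.side)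

/-- An `ε`-admissible chain of Whitney cubes joining `Q` to `S`. -/
structure AdmissibleChain {d : ℕ} {Ω : Set (Fin d → ℝ)} (W : WhitneyCovering d Ω)
    (ε : ℝ) (Q S : Cube d) where
  M : ℕ
  M_pos : 0 < M
  c : Fin M → Cube d
  mem : ∀ j, c j ∈ W.cubes
  first : c ⟨0, M_pos⟩ = Q
  last : c ⟨M - 1, Nat.sub_lt M_pos Nat.one_pos⟩ = S
  neighbors : ∀ (j : ℕ) (h : j + 1 < M),
    ((c ⟨j, Nat.lt_of_succ_lt h⟩).toSet ∩ (c ⟨j + 1, h⟩).toSet).Nonempty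
  length_le : ∑ j, (c j).side ≤ ε⁻¹ * longDist Q S
  j₀ : Fin M
  growth₁ : ∀ j : Fin M, j ≤ j₀ → ε * longDist Q (c j) ≤ (c j).side
  growth₂ : ∀ j : Fin M, j₀ ≤ j → ε * longDist (c j) S ≤ (c j).side

/-- `Ω` (with Whitney covering `W`) is an `ε`-uniform domain: any two Whitney cubes are
joined by an `ε`-admissible chain. -/
def IsUniformDomain {d : ℕ} {Ω : Set (Fin d → ℝ)} (W : WhitneyCovering d Ω) (ε : ℝ) : Prop :=
  ∀ Q ∈ W.cubes, ∀ S ∈ W.cubes, Nonempty (AdmissibleChain W ε Q S)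

/-- The non-centered Hardy–Littlewood maximal function, taken over cubes
(closed balls in the sup metric on `Fin d → ℝ`) containing `x`. -/
noncomputable def maximal (d : ℕ) (g : (Fin d → ℝ) → ℝ≥0∞) (x : Fin d → ℝ) : ℝ≥0∞ :=
  ⨆ (c : Fin d → ℝ) (r : ℝ) (_ : 0 < r) (_ : x ∈ Metric.closedBall c r),
    (∫⁻ y in Metric.closedBall c r, g y) / volume (Metric.closedBall c r)

lemma setDist_nonneg' {d : ℕ} (A B : Set (Fin d → ℝ)) : 0 ≤ setDist A B := by
  apply Real.sInf_nonneg
  rintro x ⟨a, _, b, _, rfl⟩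
  exact dist_nonneg

lemma setDist_le_dist' {d : ℕ} {A B : Set (Fin d → ℝ)} {a b : Fin d → ℝ}
    (ha : a ∈ A) (hb : b ∈ B) : setDist A B ≤ dist a b := by
  apply csInf_le
  · exact ⟨0, by rintro x ⟨u, _, v, _, rfl⟩; exact dist_nonneg⟩
  · exact Set.mem_image2_of_mem ha hb

lemma Cube.center_mem {d : ℕ} (Q : Cube d) : Q.center ∈ Q.toSet := by
  have := Q.side_pos
  simp only [Cube.toSet, Metric.mem_closedBall, dist_self]
  linarith

lemma Cube.dist_le_side {d : ℕ} (Q : Cube d) {x y : Fin d → ℝ}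
    (hx : x ∈ Q.toSet) (hy : y ∈ Q.toSet) : dist x y ≤ Q.side := by
  simp only [Cube.toSet, Metric.mem_closedBall] at hx hy
  have := dist_triangle x Q.center y
  rw [dist_comm y Q.center] at hy
  linarith

/-- The set distance between two cubes is attained. -/
lemma Cube.exists_min {d : ℕ} (Q S : Cube d) :
    ∃ a ∈ Q.toSet, ∃ b ∈ S.toSet, dist a b ≤ setDist Q.toSet S.toSet := by
  have hK : IsCompact (Q.toSet ×ˢ S.toSet) :=
    (isCompact_closedBall _ _).prod (isCompact_closedBall _ _)
  have hne : (Q.toSet ×ˢ S.toSet).Nonempty :=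
    ⟨(Q.center, S.center), Q.center_mem, S.center_mem⟩
  obtain ⟨p, hp, hmin⟩ := hK.exists_isMinOn hne
    (continuous_dist.continuousOn : ContinuousOn (fun p : _ × _ => dist p.1 p.2) _)
  refine ⟨p.1, hp.1, p.2, hp.2, ?_⟩
  apply le_csInf ⟨dist Q.center S.center,
    Set.mem_image2_of_mem Q.center_mem S.center_mem⟩
  rintro x ⟨a, ha, b, hb, rfl⟩
  exact hmin (Set.mk_mem_prod ha hb)

/-- Triangle inequality for the long distance through an intermediate cube. -/
lemma longDist_triangle {d : ℕ} (Q B S : Cube d) :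
    longDist Q S ≤ longDist Q B + longDist B S := by
  obtain ⟨a, ha, b, hb, hab⟩ := Cube.exists_min Q B
  obtain ⟨b', hb', s, hs, hbs⟩ := Cube.exists_min B S
  have h1 : setDist Q.toSet S.toSet ≤ dist a s := setDist_le_dist' ha hs
  have h2 : dist a s ≤ dist a b + dist b b' + dist b' s := dist_triangle4 a b b' s
  have h3 : dist b b' ≤ B.side := B.dist_le_side hb hb'
  have := B.side_pos
  simp only [longDist]
  linarith

/-- for an `ε`-uniform domain `Ω` with Whitney covering `W` and an
`ε`-admissible chain `[Q,S]` with central cube `Q_S`,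
`D(Q,S) ≈ Σ_{P∈[Q,S]} ℓ(P) ≈ ℓ(Q_S)`, with comparability constants depending only on `ε`
and `d`. -/
theorem stmt_18 (d : ℕ) (hd : 1 ≤ d) (ε : ℝ) (hε : 0 < ε) :
    ∃ C : ℝ, 0 < C ∧
      ∀ (Ω : Set (Fin d → ℝ)), IsOpen Ω → IsConnected Ω → Ω ≠ Set.univ →
      ∀ (W : WhitneyCovering d Ω), IsUniformDomain W ε →
      ∀ Q S : Cube d, Q ∈ W.cubes → S ∈ W.cubes →
      ∀ ch : AdmissibleChain W ε Q S,
        (C⁻¹ * longDist Q S ≤ ∑ j, (ch.c j).side) ∧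
        (∑ j, (ch.c j).side ≤ C * longDist Q S) ∧
        (C⁻¹ * longDist Q S ≤ (ch.c ch.j₀).side) ∧
        ((ch.c ch.j₀).side ≤ C * longDist Q S) := by
  have hεinv : 0 < ε⁻¹ := inv_pos.2 hε
  refine ⟨3 + 3 * ε⁻¹, by positivity, ?_⟩
  intro Ω _ _ _ W _ Q S hQ hS ch
  set C : ℝ := 3 + 3 * ε⁻¹ with hCdef
  have hC : 0 < C := by positivity
  set B := ch.c ch.j₀ with hB
  -- growth conditions at the central cube
  have hg1 : ε * longDist Q B ≤ B.side := ch.growth₁ ch.j₀ le_rfl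
  have hg2 : ε * longDist B S ≤ B.side := ch.growth₂ ch.j₀ le_rfl
  have hQB : longDist Q B ≤ ε⁻¹ * B.side := by
    rw [← mul_le_mul_iff_right₀ hε, ← mul_assoc, mul_inv_cancel₀ hε.ne', one_mul]
    exact hg1
  have hBS : longDist B S ≤ ε⁻¹ * B.side := by
    rw [← mul_le_mul_iff_right₀ hε, ← mul_assoc, mul_inv_cancel₀ hε.ne', one_mul]
    exact hg2
  -- D(Q,S) ≤ 2 ε⁻¹ ℓ(B)
  have hDB : longDist Q S ≤ 2 * ε⁻¹ * B.side := by
    have := longDist_triangle Q B S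
    linarith
  have hℓsum : B.side ≤ ∑ j, (ch.c j).side :=
    Finset.single_le_sum (fun i _ => (ch.c i).side_pos.le) (Finset.mem_univ ch.j₀)
  have hsum_nonneg : (0:ℝ) ≤ ∑ j, (ch.c j).side :=
    Finset.sum_nonneg fun i _ => (ch.c i).side_pos.le
  have hD_nonneg : 0 ≤ longDist Q S := by
    have := setDist_nonneg' Q.toSet S.toSet
    have := Q.side_pos
    have := S.side_pos
    simp only [longDist]
    linarith
  have hsum_le : ∑ j, (ch.c j).side ≤ ε⁻¹ * longDist Q S := ch.length_le
  have hBpos := B.side_pos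
  refine ⟨?_, ?_, ?_, ?_⟩
  · rw [inv_mul_le_iff₀ hC]
    calc longDist Q S ≤ 2 * ε⁻¹ * B.side := hDB
      _ ≤ 2 * ε⁻¹ * ∑ j, (ch.c j).side := by
          apply mul_le_mul_of_nonneg_left hℓsum (by positivity)
      _ ≤ C * ∑ j, (ch.c j).side := by
          apply mul_le_mul_of_nonneg_right _ hsum_nonneg
          rw [hCdef]; linarith
  · calc ∑ j, (ch.c j).side ≤ ε⁻¹ * longDist Q S := hsum_le
      _ ≤ C * longDist Q S := by
          apply mul_le_mul_of_nonneg_right _ hD_nonneg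
          rw [hCdef]; linarith
  · rw [inv_mul_le_iff₀ hC]
    calc longDist Q S ≤ 2 * ε⁻¹ * B.side := hDB
      _ ≤ C * B.side := by
          apply mul_le_mul_of_nonneg_right _ hBpos.le
          rw [hCdef]; linarith
  · calc B.side ≤ ∑ j, (ch.c j).side := hℓsum
      _ ≤ ε⁻¹ * longDist Q S := hsum_le
      _ ≤ C * longDist Q S := by
          apply mul_le_mul_of_nonneg_right _ hD_nonneg
          rw [hCdef]; linarith
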